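/- Let Ω be a bounded measurable domain, α ∈ (0,1), ε ∈ (0, δ_α] with δ_α = exp(α/(α-1)), and u, v ∈ L^∞(Ω) with Λ = max{‖u‖_∞, ‖v‖_∞} > ε. Then ‖f(u) - f(v)‖²_{L²(Ω)} ≤ H_α(ε)²·‖u - v‖^{2α}_{L^{2α}(Ω)} + Υ(ε,Λ)²·‖u - v‖²_{L²(Ω)}, where f(w) = w·ln|w| pointwise (f(0)=0), H_α(ε) = (2ε)^{1-α}(|ln ε|+1), and Υ(ε,Λ) = max_{ε ≤ y ≤ Λ}(|ln y| + 1). -/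

import Mathlib

open MeasureTheory

noncomputable def f (z : ℂ) : ℂ := z * Real.log (‖z‖)

noncomputable def Υ (ε Λ : ℝ) : ℝ := sSup ((fun y => |Real.log y| + 1) '' Set.Icc ε Λ)

lemma core_bound (a b : ℂ) (hba : ‖b‖ ≤ ‖a‖) :
    ‖f a - f b‖ ≤ (|Real.log (‖a‖)| + 1) * ‖a - b‖ := by
  rcases eq_or_ne a 0 with rfl | ha
  · have hb0 : ‖b‖ = 0 := le_antisymm (by simpa using hba) (norm_nonneg b)
    have hb : b = 0 := norm_eq_zero.mp hb0
    simp [hb, f]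
  rcases eq_or_ne b 0 with rfl | hb
  · simp only [f, map_zero, norm_zero, Real.log_zero, Complex.ofReal_zero, mul_zero, sub_zero]
    rw [norm_mul, Complex.norm_real, Real.norm_eq_abs]
    have h1 : 0 ≤ ‖a‖ := norm_nonneg a
    nlinarith [abs_nonneg (Real.log (‖a‖))]
  have ha' : 0 < ‖a‖ := norm_pos_iff.mpr ha
  have hb' : 0 < ‖b‖ := norm_pos_iff.mpr hb
  have hexp : f a - f b = (a - b) * (Real.log (‖a‖) : ℂ)
      + b * ((Real.log (‖a‖) : ℂ) - (Real.log (‖b‖) : ℂ)) := by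
    simp only [f]; ring
  have hlog : Real.log (‖b‖) ≤ Real.log (‖a‖) :=
    Real.log_le_log hb' hba
  have h2 : ‖b‖ * (Real.log (‖a‖) - Real.log (‖b‖))
      ≤ ‖a‖ - ‖b‖ := by
    have h3 := Real.log_le_sub_one_of_pos (div_pos ha' hb')
    rw [Real.log_div (ne_of_gt ha') (ne_of_gt hb')] at h3
    have h4 := mul_le_mul_of_nonneg_left h3 hb'.le
    have h5 : ‖b‖ * (‖a‖ / ‖b‖ - 1)
        = ‖a‖ - ‖b‖ := by field_simp
    linarith [h4, h5.le]
  have h6 : ‖a‖ - ‖b‖ ≤ ‖a - b‖ := by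
    have := abs_norm_sub_norm_le a b
    have := abs_le.mp this
    linarith [this.2, le_abs_self (‖a‖ - ‖b‖)]
  calc ‖f a - f b‖
      ≤ ‖(a - b) * (Real.log (‖a‖) : ℂ)‖
        + ‖b * ((Real.log (‖a‖) : ℂ) - (Real.log (‖b‖) : ℂ))‖ := by
        rw [hexp]; exact norm_add_le _ _
    _ = ‖a - b‖ * |Real.log (‖a‖)|
        + ‖b‖ * (Real.log (‖a‖) - Real.log (‖b‖)) := by
        rw [norm_mul, norm_mul, Complex.norm_real, Real.norm_eq_abs]
        congr 1
        rw [show ((Real.log (‖a‖) : ℂ) - (Real.log (‖b‖) : ℂ))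
            = ((Real.log (‖a‖) - Real.log (‖b‖) : ℝ) : ℂ) by push_cast; ring,
          Complex.norm_real, Real.norm_eq_abs, abs_of_nonneg (by linarith)]
    _ ≤ ‖a - b‖ * |Real.log (‖a‖)| + ‖a - b‖ := by
        linarith
    _ = (|Real.log (‖a‖)| + 1) * ‖a - b‖ := by ring


lemma mono_aux (α ε m : ℝ) (hα : α ∈ Set.Ioo (0:ℝ) 1) (hm : 0 < m) (hmε : m ≤ ε)
    (hεδ : ε ≤ Real.exp (α / (α - 1))) :
    (2*m) ^ (1-α) * (1 - Real.log m) ≤ (2*ε) ^ (1-α) * (1 - Real.log ε) := by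
  obtain ⟨hα0, hα1⟩ := hα
  have hε : 0 < ε := lt_of_lt_of_le hm hmε
  have hc0 : 0 < 1 - α := by linarith
  set t := ε / m with ht
  have ht1 : 1 ≤ t := (one_le_div hm).mpr hmε
  have ht0 : 0 < t := lt_of_lt_of_le one_pos ht1
  have hlogε : Real.log ε ≤ α / (α - 1) := by
    calc Real.log ε ≤ Real.log (Real.exp (α / (α - 1))) := Real.log_le_log hε hεδ
      _ = α / (α - 1) := Real.log_exp _
  have hkey0 : α / (α - 1) = 1 - 1 / (1 - α) := by
    have h : α - 1 ≠ 0 := by linarith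
    have h2 : (1:ℝ) - α ≠ 0 := by linarith
    field_simp
    ring
  have h1c : 1 / (1 - α) ≤ 1 - Real.log ε := by rw [hkey0] at hlogε; linarith
  have htc1 : 1 ≤ t ^ (1-α) := by
    calc (1:ℝ) = (1:ℝ) ^ (1-α) := (Real.one_rpow _).symm
      _ ≤ t ^ (1-α) := Real.rpow_le_rpow (by norm_num) ht1 hc0.le
  have hlogt : Real.log t ≤ (t ^ (1-α) - 1) / (1 - α) := by
    have h := Real.log_le_sub_one_of_pos (Real.rpow_pos_of_pos ht0 (1-α))
    rw [Real.log_rpow ht0] at h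
    rw [le_div_iff₀ hc0]
    nlinarith
  have hmain : 1 - Real.log ε + Real.log t ≤ t ^ (1-α) * (1 - Real.log ε) := by
    have h2 : Real.log t ≤ (t ^ (1-α) - 1) * (1 - Real.log ε) := by
      calc Real.log t ≤ (t ^ (1-α) - 1) / (1 - α) := hlogt
        _ = (t ^ (1-α) - 1) * (1 / (1 - α)) := by ring
        _ ≤ (t ^ (1-α) - 1) * (1 - Real.log ε) :=
            mul_le_mul_of_nonneg_left h1c (by linarith)
    nlinarith
  have h2ε : (2*ε) = (2*m) * t := by rw [ht]; field_simp
  have hrw : (2*ε) ^ (1-α) = (2*m) ^ (1-α) * t ^ (1-α) := by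
    rw [h2ε, Real.mul_rpow (by positivity) ht0.le]
  have hlogm : Real.log m = Real.log ε - Real.log t := by
    rw [ht, Real.log_div (ne_of_gt hε) (ne_of_gt hm)]; ring
  have hpos : (0:ℝ) < (2*m) ^ (1-α) := Real.rpow_pos_of_pos (by linarith) _
  rw [hrw, hlogm]
  calc (2*m) ^ (1-α) * (1 - (Real.log ε - Real.log t))
      = (2*m) ^ (1-α) * (1 - Real.log ε + Real.log t) := by ring
    _ ≤ (2*m) ^ (1-α) * (t ^ (1-α) * (1 - Real.log ε)) :=
        mul_le_mul_of_nonneg_left hmain hpos.le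
    _ = (2*m) ^ (1-α) * t ^ (1-α) * (1 - Real.log ε) := by ring

lemma eps_lt_one (α ε : ℝ) (hα : α ∈ Set.Ioo (0:ℝ) 1) (hεδ : ε ≤ Real.exp (α / (α - 1))) :
    ε < 1 := by
  obtain ⟨hα0, hα1⟩ := hα
  have : α / (α - 1) < 0 := div_neg_of_pos_of_neg hα0 (by linarith)
  calc ε ≤ Real.exp (α / (α - 1)) := hεδ
    _ < 1 := Real.exp_lt_one_iff.mpr this

lemma lipA_aux (α ε : ℝ) (hα : α ∈ Set.Ioo (0:ℝ) 1) (hε : 0 < ε)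
    (hεδ : ε ≤ Real.exp (α / (α - 1))) (a b : ℂ)
    (ha : ‖a‖ ≤ ε) (hba : ‖b‖ ≤ ‖a‖) :
    ‖f a - f b‖ ≤ (2*ε) ^ (1-α) * (|Real.log ε| + 1) * ‖a - b‖ ^ α := by
  rcases eq_or_ne a b with rfl | hab
  · simp only [sub_self, norm_zero]
    rw [Real.zero_rpow (ne_of_gt hα.1)]
    simp
  have ha0 : a ≠ 0 := by
    rintro rfl
    exact hab (by simpa [le_antisymm (by simpa using hba) (norm_nonneg b)] using
      (norm_eq_zero.mp (le_antisymm (by simpa using hba) (norm_nonneg b))).symm)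
  have hA : 0 < ‖a‖ := norm_pos_iff.mpr ha0
  have hD : 0 < ‖a - b‖ := norm_pos_iff.mpr (sub_ne_zero.mpr hab)
  have hε1 : ε < 1 := eps_lt_one α ε hα hεδ
  have hlogA : Real.log (‖a‖) ≤ 0 := Real.log_nonpos hA.le (by linarith)
  have hlogε : Real.log ε ≤ 0 := Real.log_nonpos hε.le hε1.le
  have hcore := core_bound a b hba
  rw [abs_of_nonpos hlogA] at hcore
  have hsplit : ‖a - b‖ ^ α * ‖a - b‖ ^ (1-α) = ‖a - b‖ := by
    rw [← Real.rpow_add hD]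
    norm_num
  have hD2 : ‖a - b‖ ≤ 2 * ‖a‖ := by
    calc ‖a - b‖ ≤ ‖a‖ + ‖b‖ := by
          simpa using norm_sub_le a b
      _ ≤ 2 * ‖a‖ := by linarith
  have hDr : ‖a - b‖ ^ (1-α) ≤ (2 * ‖a‖) ^ (1-α) :=
    Real.rpow_le_rpow hD.le hD2 (by linarith [hα.2])
  have hone : (0:ℝ) ≤ 1 - Real.log (‖a‖) := by linarith
  calc ‖f a - f b‖
      ≤ (-Real.log (‖a‖) + 1) * ‖a - b‖ := hcore
    _ = ‖a - b‖ ^ α * (‖a - b‖ ^ (1-α) * (1 - Real.log (‖a‖))) := by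
        conv_lhs => rw [← hsplit]
        ring
    _ ≤ ‖a - b‖ ^ α * ((2 * ‖a‖) ^ (1-α) * (1 - Real.log (‖a‖))) := by
        apply mul_le_mul_of_nonneg_left _ (Real.rpow_nonneg hD.le _)
        exact mul_le_mul_of_nonneg_right hDr hone
    _ ≤ ‖a - b‖ ^ α * ((2 * ε) ^ (1-α) * (1 - Real.log ε)) := by
        apply mul_le_mul_of_nonneg_left _ (Real.rpow_nonneg hD.le _)
        exact mono_aux α ε (‖a‖) hα hA ha hεδ
    _ = (2*ε) ^ (1-α) * (|Real.log ε| + 1) * ‖a - b‖ ^ α := by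
        rw [abs_of_nonpos hlogε]; ring

lemma le_upsilon (ε Λ : ℝ) (hε : 0 < ε) (hεΛ : ε ≤ Λ) {y : ℝ} (hy : y ∈ Set.Icc ε Λ) :
    |Real.log y| + 1 ≤ Υ ε Λ := by
  apply le_csSup
  · refine ⟨max |Real.log ε| |Real.log Λ| + 1, ?_⟩
    rintro z ⟨w, hw, rfl⟩
    have h1 : Real.log ε ≤ Real.log w := Real.log_le_log hε hw.1
    have h2 : Real.log w ≤ Real.log Λ := Real.log_le_log (lt_of_lt_of_le hε hw.1) hw.2
    have h3 := abs_le_max_abs_abs h1 h2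
    simpa using add_le_add_right h3 1
  · exact Set.mem_image_of_mem _ hy

lemma upsilon_nonneg (ε Λ : ℝ) (hε : 0 < ε) (hεΛ : ε ≤ Λ) : 0 ≤ Υ ε Λ :=
  le_trans (by positivity) (le_upsilon ε Λ hε hεΛ ⟨le_refl ε, hεΛ⟩)

lemma lipB_aux (ε Λ : ℝ) (hε : 0 < ε) (hεΛ : ε ≤ Λ) (a b : ℂ)
    (hεa : ε ≤ ‖a‖) (haΛ : ‖a‖ ≤ Λ) (hba : ‖b‖ ≤ ‖a‖) :
    ‖f a - f b‖ ≤ Υ ε Λ * ‖a - b‖ := by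
  calc ‖f a - f b‖
      ≤ (|Real.log (‖a‖)| + 1) * ‖a - b‖ := core_bound a b hba
    _ ≤ Υ ε Λ * ‖a - b‖ :=
        mul_le_mul_of_nonneg_right (le_upsilon ε Λ hε hεΛ ⟨hεa, haΛ⟩) (norm_nonneg _)

lemma lipA (α ε : ℝ) (hα : α ∈ Set.Ioo (0:ℝ) 1) (hε : 0 < ε)
    (hεδ : ε ≤ Real.exp (α / (α - 1))) (a b : ℂ)
    (ha : ‖a‖ ≤ ε) (hb : ‖b‖ ≤ ε) :
    ‖f a - f b‖ ≤ (2*ε) ^ (1-α) * (|Real.log ε| + 1) * ‖a - b‖ ^ α := by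
  rcases le_total (‖b‖) (‖a‖) with hba | hab
  · exact lipA_aux α ε hα hε hεδ a b ha hba
  · have := lipA_aux α ε hα hε hεδ b a hb hab
    rwa [show f b - f a = -(f a - f b) by ring, show b - a = -(a - b) by ring,
      norm_neg, norm_neg] at this

theorem stmt_11 {d : ℕ} (Ω : Set (Fin d → ℝ)) (hΩ : MeasurableSet Ω)
    (hfin : volume Ω ≠ ⊤) (α : ℝ) (hα : α ∈ Set.Ioo (0:ℝ) 1)
    (ε : ℝ) (hε : 0 < ε) (hεδ : ε ≤ Real.exp (α / (α - 1)))
    (u v : (Fin d → ℝ) → ℂ) (hu : Measurable u) (hv : Measurable v)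
    (Λ : ℝ) (hΛ : ε < Λ)
    (hub : ∀ᵐ x ∂(volume.restrict Ω), ‖u x‖ ≤ Λ)
    (hvb : ∀ᵐ x ∂(volume.restrict Ω), ‖v x‖ ≤ Λ) :
    (∫ x in Ω, ‖f (u x) - f (v x)‖ ^ (2:ℝ)) ≤
      ((2 * ε) ^ (1 - α) * (|Real.log ε| + 1)) ^ 2 *
          (∫ x in Ω, ‖u x - v x‖ ^ (2 * α))
        + (Υ ε Λ) ^ 2 * (∫ x in Ω, ‖u x - v x‖ ^ (2:ℝ)) := by
  have hεΛ : ε ≤ Λ := hΛ.le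
  have hΥ0 : 0 ≤ Υ ε Λ := upsilon_nonneg ε Λ hε hεΛ
  have hH0 : 0 ≤ (2 * ε) ^ (1 - α) * (|Real.log ε| + 1) := by positivity
  -- pointwise a.e. bound
  have hpoint : ∀ᵐ x ∂(volume.restrict Ω),
      ‖f (u x) - f (v x)‖ ^ (2:ℝ) ≤
        ((2 * ε) ^ (1 - α) * (|Real.log ε| + 1)) ^ 2 * ‖u x - v x‖ ^ (2 * α)
          + (Υ ε Λ) ^ 2 * ‖u x - v x‖ ^ (2:ℝ) := by
    filter_upwards [hub, hvb] with x hux hvx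
    set a := u x with ha'
    set b := v x with hb'
    have hD0 : (0:ℝ) ≤ ‖a - b‖ := norm_nonneg _
    have hF0 : (0:ℝ) ≤ ‖f a - f b‖ := norm_nonneg _
    have e1 : ‖f a - f b‖ ^ (2:ℝ) = ‖f a - f b‖ ^ (2:ℕ) := by
      rw [show ((2:ℝ)) = ((2:ℕ):ℝ) by norm_num, Real.rpow_natCast]
    have e2 : ‖a - b‖ ^ (2:ℝ) = ‖a - b‖ ^ (2:ℕ) := by
      rw [show ((2:ℝ)) = ((2:ℕ):ℝ) by norm_num, Real.rpow_natCast]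
    have e3 : ‖a - b‖ ^ (2 * α) = (‖a - b‖ ^ α) ^ (2:ℕ) := by
      rw [← Real.rpow_natCast (‖a - b‖ ^ α) 2, ← Real.rpow_mul hD0]
      norm_num [mul_comm]
    rw [e1, e2, e3]
    rcases le_or_gt (max (‖a‖) (‖b‖)) ε with hcase | hcase
    · have h := lipA α ε hα hε hεδ a b (le_trans (le_max_left _ _) hcase)
        (le_trans (le_max_right _ _) hcase)
      have hsq : ‖f a - f b‖ ^ (2:ℕ)
          ≤ ((2 * ε) ^ (1 - α) * (|Real.log ε| + 1) * ‖a - b‖ ^ α) ^ (2:ℕ) :=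
        pow_le_pow_left₀ hF0 h 2
      have hnn : (0:ℝ) ≤ (Υ ε Λ) ^ 2 * ‖a - b‖ ^ (2:ℕ) := by positivity
      nlinarith [hsq, hnn]
    · have h : ‖f a - f b‖ ≤ Υ ε Λ * ‖a - b‖ := by
        rcases le_total (‖b‖) (‖a‖) with hba | hab
        · have hεa : ε ≤ ‖a‖ := by
            rw [max_eq_left hba] at hcase; exact hcase.le
          exact lipB_aux ε Λ hε hεΛ a b hεa hux hba
        · have hεb : ε ≤ ‖b‖ := by
            rw [max_eq_right hab] at hcase; exact hcase.le
          have := lipB_aux ε Λ hε hεΛ b a hεb hvx hab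
          rwa [show f b - f a = -(f a - f b) by ring, show b - a = -(a - b) by ring,
            norm_neg, norm_neg] at this
      have hsq : ‖f a - f b‖ ^ (2:ℕ)
          ≤ (Υ ε Λ * ‖a - b‖) ^ (2:ℕ) := pow_le_pow_left₀ hF0 h 2
      have hnn : (0:ℝ) ≤ ((2 * ε) ^ (1 - α) * (|Real.log ε| + 1)) ^ 2
          * (‖a - b‖ ^ α) ^ (2:ℕ) := by positivity
      nlinarith [hsq, hnn]
  -- integrability
  haveI : IsFiniteMeasure (volume.restrict Ω) :=
    ⟨by rwa [Measure.restrict_apply_univ, lt_top_iff_ne_top]⟩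
  have hDmeas : Measurable (fun x => ‖u x - v x‖) :=
    continuous_norm.measurable.comp (hu.sub hv)
  have hDb : ∀ᵐ x ∂(volume.restrict Ω), ‖u x - v x‖ ≤ 2 * Λ := by
    filter_upwards [hub, hvb] with x h1 h2
    calc ‖u x - v x‖ ≤ ‖u x‖ + ‖v x‖ := by
          simpa using norm_sub_le (u x) (v x)
      _ ≤ 2 * Λ := by linarith
  have int1 : Integrable (fun x => ‖u x - v x‖ ^ (2 * α)) (volume.restrict Ω) := by
    apply Integrable.mono' (g := fun _ => (2 * Λ) ^ (2 * α)) (integrable_const _)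
    · exact (hDmeas.pow_const (2 * α)).aestronglyMeasurable
    · filter_upwards [hDb] with x hx
      rw [Real.norm_eq_abs, abs_of_nonneg (Real.rpow_nonneg (norm_nonneg _) _)]
      exact Real.rpow_le_rpow (norm_nonneg _) hx (by linarith [hα.1])
  have int2 : Integrable (fun x => ‖u x - v x‖ ^ (2:ℝ)) (volume.restrict Ω) := by
    apply Integrable.mono' (g := fun _ => (2 * Λ) ^ (2:ℝ)) (integrable_const _)
    · exact (hDmeas.pow_const (2:ℝ)).aestronglyMeasurable
    · filter_upwards [hDb] with x hx
      rw [Real.norm_eq_abs, abs_of_nonneg (Real.rpow_nonneg (norm_nonneg _) _)]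
      exact Real.rpow_le_rpow (norm_nonneg _) hx (by norm_num)
  have int1' := int1.const_mul (((2 * ε) ^ (1 - α) * (|Real.log ε| + 1)) ^ 2)
  have int2' := int2.const_mul ((Υ ε Λ) ^ 2)
  have hle := integral_mono_of_nonneg
    (Filter.Eventually.of_forall fun x => Real.rpow_nonneg (norm_nonneg _) _)
    (int1'.add int2') hpoint
  simp only [Pi.add_apply] at hle
  rwa [integral_add int1' int2', integral_const_mul, integral_const_mul] at hle
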